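/- Let Γ ⊆ SO(1,n) × G be a discrete subgroup acting properly on dS^{1,n} × G (G a connected Lie group, acting by isometries on the first factor and left translations on the second). If the projection of Γ to G is non-discrete, then there is a compact set K ⊆ G, a spacelike totally geodesic hypersphere S ⊆ dS^{1,n}, and infinitely many distinct γₙ ∈ Γ with γₙ(S × K) ∩ (S × K) ≠ ∅; hence the action is not proper, a contradiction. Consequently no discrete subgroup of SO(1,n) × G (n ≥ 2) acts properly discontinuously and cocompactly on dS^{1,n} × G. -/

import Mathlib

/-- The Lorentz quadratic form of signature `(1, n)` on `ℝ^{n+1}`. -/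
def lorentzQ' (n : ℕ) (x : Fin (n + 1) → ℝ) : ℝ :=
  -(x 0) ^ 2 + ∑ i : Fin n, x i.succ ^ 2

/-- De Sitter space `dS^{1,n} ⊂ ℝ^{1,n}`. -/
def deSitter' (n : ℕ) : Set (Fin (n + 1) → ℝ) := {x | lorentzQ' n x = 1}

/-- The action of `SO(1,n) × G` on `dS^{1,n} × G`: isometries on the first factor and
left translations on the second. -/
def dSAct {n : ℕ} {G : Type*} [Group G] (γ : GL (Fin (n + 1)) ℝ × G)
    (p : (Fin (n + 1) → ℝ) × G) : (Fin (n + 1) → ℝ) × G :=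
  (γ.1.val.mulVec p.1, γ.2 * p.2)

lemma CMaux.exists_sphere_point (n : ℕ) (hn : 2 ≤ n)
    (A : Matrix (Fin (n + 1)) (Fin (n + 1)) ℝ)
    (hA : ∀ x, lorentzQ' n (A.mulVec x) = lorentzQ' n x) :
    ∃ x, lorentzQ' n x = 1 ∧ x 0 = 0 ∧ (A.mulVec x) 0 = 0 := by
  classical
  -- linear map to ℝ × ℝ has nontrivial kernel
  set f : ((Fin (n + 1) → ℝ) →ₗ[ℝ] ℝ × ℝ) :=
    LinearMap.prod (LinearMap.proj 0) ((LinearMap.proj 0).comp A.mulVecLin) with hf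
  have hnotinj : ¬ Function.Injective f := by
    intro hinj
    have := LinearMap.finrank_le_finrank_of_injective hinj
    simp [Module.finrank_pi, Module.finrank_prod] at this
    omega
  rw [Function.not_injective_iff] at hnotinj
  obtain ⟨a, b, hab, hne⟩ := hnotinj
  set y : Fin (n + 1) → ℝ := a - b with hy
  have hy0 : y ≠ 0 := sub_ne_zero.mpr hne
  have hfy : f y = 0 := by rw [hy, map_sub, hab, sub_self]
  have hy0' : y 0 = 0 := congrArg Prod.fst hfy
  have hAy0 : (A.mulVec y) 0 = 0 := by
    have := congrArg Prod.snd hfy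
    simpa [f, Matrix.mulVecLin_apply] using this
  -- the spatial norm of y is positive
  set q : ℝ := ∑ i : Fin n, y i.succ ^ 2 with hq
  have hqnonneg : ∀ i ∈ Finset.univ, (0:ℝ) ≤ y (Fin.succ i) ^ 2 := fun i _ => sq_nonneg _
  have hqpos : 0 < q := by
    obtain ⟨j, hj⟩ := Function.ne_iff.mp hy0
    have hjne : j ≠ 0 := by rintro rfl; exact hj hy0'
    obtain ⟨i, rfl⟩ := Fin.exists_succ_eq.mpr hjne
    have h1 : y i.succ ^ 2 ≤ q := Finset.single_le_sum hqnonneg (Finset.mem_univ i)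
    have hj2 : y i.succ ≠ 0 := by simpa using hj
    have h2 : 0 < y i.succ ^ 2 := by positivity
    linarith
  set c : ℝ := (Real.sqrt q)⁻¹ with hc
  refine ⟨c • y, ?_, ?_, ?_⟩
  · unfold lorentzQ'
    have h0 : (c • y) 0 = 0 := by simp [hy0']
    rw [h0]
    have : ∑ i : Fin n, (c • y) i.succ ^ 2 = c ^ 2 * q := by
      rw [hq, Finset.mul_sum]
      exact Finset.sum_congr rfl fun i _ => by ring_nf; simp [Pi.smul_apply]; ring
    rw [this, hc]
    have hsq : Real.sqrt q ^ 2 = q := Real.sq_sqrt hqpos.le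
    rw [inv_pow, hsq]
    field_simp
    norm_num
  · simp [hy0']
  · rw [Matrix.mulVec_smul]
    simp [hAy0]

lemma CMaux.continuous_lorentzQ' (n : ℕ) : Continuous (lorentzQ' n) := by
  unfold lorentzQ'
  exact (((continuous_apply (0 : Fin (n+1))).pow 2).neg).add
    (continuous_finset_sum _ fun i _ => (continuous_apply i.succ).pow 2)

/-- The standard spacelike hypersphere is compact. -/

lemma CMaux.isCompact_sphere (n : ℕ) :
    IsCompact {x : Fin (n + 1) → ℝ | lorentzQ' n x = 1 ∧ x 0 = 0} := by
  refine IsCompact.of_isClosed_subset (isCompact_closedBall (0 : Fin (n+1) → ℝ) 1) ?_ ?_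
  · exact (isClosed_eq (CMaux.continuous_lorentzQ' n) continuous_const).inter
      (isClosed_eq (continuous_apply 0) continuous_const)
  · rintro x ⟨hx1, hx0⟩
    rw [Metric.mem_closedBall, dist_zero_right]
    refine (pi_norm_le_iff_of_nonneg zero_le_one).mpr fun j => ?_
    have hsum : ∑ i : Fin n, x i.succ ^ 2 = 1 := by
      have := hx1; unfold lorentzQ' at this; rw [hx0] at this; linarith
    rcases eq_or_ne j 0 with rfl | hj
    · simp [hx0]
    · obtain ⟨i, rfl⟩ := Fin.exists_succ_eq.mpr hj
      have h1 : x i.succ ^ 2 ≤ 1 := by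
        rw [← hsum]
        exact Finset.single_le_sum (fun k _ => sq_nonneg (x k.succ)) (Finset.mem_univ i)
      rw [Real.norm_eq_abs]
      nlinarith [abs_nonneg (x i.succ), sq_abs (x i.succ)]
  
/-- De Sitter space is unbounded. -/

lemma CMaux.exists_big (n : ℕ) (hn : 2 ≤ n) (R : ℝ) :
    ∃ x, lorentzQ' n x = 1 ∧ R < ‖x‖ := by
  obtain ⟨m, rfl⟩ : ∃ m, n = m + 1 := ⟨n - 1, by omega⟩
  set t : ℝ := |R| + 1 with ht
  set x : Fin (m + 1 + 1) → ℝ :=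
    fun j => if j = 0 then t else if j = 1 then Real.sqrt (1 + t ^ 2) else 0 with hx
  have hx0 : x 0 = t := by simp [hx]
  refine ⟨x, ?_, ?_⟩
  · unfold lorentzQ'
    have hterm : ∀ i : Fin (m + 1), x i.succ ^ 2 = if i = 0 then 1 + t ^ 2 else 0 := by
      intro i
      rcases eq_or_ne i 0 with rfl | hi
      · have hxv : x (Fin.succ (0 : Fin (m + 1))) = Real.sqrt (1 + t ^ 2) := by
          rw [hx]; simp [Fin.succ_zero_eq_one]
        rw [hxv, if_pos rfl, Real.sq_sqrt (by positivity)]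
      · have hs0 : (i.succ : Fin (m + 1 + 1)) ≠ 0 := Fin.succ_ne_zero i
        have hs1 : (i.succ : Fin (m + 1 + 1)) ≠ 1 := by
          rw [← Fin.succ_zero_eq_one]
          exact fun h => hi (Fin.succ_injective _ h)
        rw [hx]; simp only [if_neg hs0, if_neg hs1, if_neg hi]
        norm_num
    rw [Finset.sum_congr rfl fun i _ => hterm i, Finset.sum_ite_eq' Finset.univ 0 fun _ => 1 + t ^ 2]
    simp [hx0]
  · have := norm_le_pi_norm x 0
    rw [hx0, Real.norm_eq_abs] at this
    have h1 : R ≤ |R| := le_abs_self R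
    have h2 : |t| = t := abs_of_pos (by positivity)
    linarith [abs_nonneg R, h2 ▸ this]

/-- Calabi–Markus phenomenon for products: for `n ≥ 2` and `G` a connected
Lie group, no discrete subgroup `Γ ⊆ SO(1,n) × G` acts properly discontinuously and
cocompactly on `dS^{1,n} × G`.  (Its proof: if the projection of `Γ` to `G` were
non-discrete one finds a compact `K ⊆ G`, a spacelike totally geodesic hypersphere
`S ⊆ dS^{1,n}`, and infinitely many distinct `γₙ ∈ Γ` with `γₙ(S × K) ∩ (S × K) ≠ ∅`,
contradicting properness; if it were discrete one contradicts the classical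
Calabi–Markus theorem.) -/
theorem calabi_markus_product (n : ℕ) (hn : 2 ≤ n)
    {G : Type*} [Group G] [TopologicalSpace G] [IsTopologicalGroup G] [ConnectedSpace G]
    [LocallyCompactSpace G]
    (Γ : Subgroup (GL (Fin (n + 1)) ℝ × G)) [DiscreteTopology Γ]
    (hlor : ∀ γ ∈ Γ, (∀ x, lorentzQ' n (γ.1.val.mulVec x) = lorentzQ' n x) ∧
      γ.1.val.det = 1)
    (hpd : ∀ K ⊆ (deSitter' n) ×ˢ (Set.univ : Set G), IsCompact K →
      {γ : Γ | (dSAct (γ : GL (Fin (n + 1)) ℝ × G) '' K ∩ K).Nonempty}.Finite)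
    (hcc : ∃ K, IsCompact K ∧ K ⊆ (deSitter' n) ×ˢ (Set.univ : Set G) ∧
      ∀ p ∈ (deSitter' n) ×ˢ (Set.univ : Set G), ∃ γ ∈ Γ,
        dSAct γ p ∈ K) :
    False := by
  classical
  obtain ⟨K, hKc, hKsub, hKcov⟩ := hcc
  set S : Set (Fin (n + 1) → ℝ) := {x | lorentzQ' n x = 1 ∧ x 0 = 0} with hS
  set D : Set G := insert 1 (Prod.snd '' K) with hD
  have hDc : IsCompact D := (hKc.image continuous_snd).insert 1
  have hSDc : IsCompact (S ×ˢ D) := (CMaux.isCompact_sphere n).prod hDc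
  have hSDsub : S ×ˢ D ⊆ deSitter' n ×ˢ (Set.univ : Set G) := by
    rintro ⟨x, g⟩ ⟨⟨hx1, _⟩, _⟩; exact ⟨hx1, trivial⟩
  set F : Set Γ :=
    {γ : Γ | (dSAct (γ : GL (Fin (n + 1)) ℝ × G) '' (S ×ˢ D) ∩ (S ×ˢ D)).Nonempty} with hFdef
  have hF : F.Finite := hpd _ hSDsub hSDc
  set K₁ : Set (Fin (n + 1) → ℝ) := Prod.fst '' K with hK₁
  have hK₁c : IsCompact K₁ := hKc.image continuous_fst
  set T : Γ → Set (Fin (n + 1) → ℝ) :=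
    fun γ => (fun v => (((γ : GL (Fin (n + 1)) ℝ × G).1⁻¹ :
      GL (Fin (n + 1)) ℝ) : Matrix (Fin (n + 1)) (Fin (n + 1)) ℝ).mulVec v) '' K₁ with hT
  have key : deSitter' n ⊆ ⋃ γ ∈ F, T γ := by
    intro x hx
    obtain ⟨γ, hγΓ, hγK⟩ := hKcov (x, 1) ⟨hx, trivial⟩
    obtain ⟨hQ, _⟩ := hlor γ hγΓ
    obtain ⟨s, hs1, hs0, hAs0⟩ := CMaux.exists_sphere_point n hn γ.1.val hQ
    have hγF : (⟨γ, hγΓ⟩ : Γ) ∈ F := by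
      refine ⟨dSAct γ (s, 1), ⟨(s, 1), ⟨⟨hs1, hs0⟩, Set.mem_insert _ _⟩, rfl⟩, ?_, ?_⟩
      · exact ⟨by show lorentzQ' n (γ.1.val.mulVec s) = 1; rw [hQ s]; exact hs1, hAs0⟩
      · exact Set.mem_insert_of_mem _ ⟨dSAct γ (x, 1), hγK, rfl⟩
    refine Set.mem_biUnion hγF ?_
    refine ⟨γ.1.val.mulVec x, ⟨dSAct γ (x, 1), hγK, rfl⟩, ?_⟩
    show ((γ.1⁻¹ : GL (Fin (n + 1)) ℝ) :
      Matrix (Fin (n + 1)) (Fin (n + 1)) ℝ).mulVec (γ.1.val.mulVec x) = x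
    rw [Matrix.mulVec_mulVec]
    have h1 : ((γ.1⁻¹ : GL (Fin (n + 1)) ℝ) :
        Matrix (Fin (n + 1)) (Fin (n + 1)) ℝ) * γ.1.val = 1 := γ.1.inv_mul
    rw [h1, Matrix.one_mulVec]
  have hTc : ∀ γ ∈ F, IsCompact (T γ) := by
    intro γ _
    refine hK₁c.image ?_
    have hc := (Matrix.mulVecLin (((γ : GL (Fin (n + 1)) ℝ × G).1⁻¹ :
      GL (Fin (n + 1)) ℝ) : Matrix (Fin (n + 1)) (Fin (n + 1)) ℝ)).continuous_of_finiteDimensional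
    exact hc
  have hdSclosed : IsClosed (deSitter' n) :=
    isClosed_eq (CMaux.continuous_lorentzQ' n) continuous_const
  have hdSc : IsCompact (deSitter' n) :=
    (hF.isCompact_biUnion hTc).of_isClosed_subset hdSclosed key
  obtain ⟨R, hR⟩ := isBounded_iff_forall_norm_le.mp hdSc.isBounded
  obtain ⟨x, hx1, hxR⟩ := CMaux.exists_big n hn R
  exact absurd (hR x hx1) (not_le.mpr hxR)
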